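/- (Identity for marginal-matched tuples, key step in the proof of Theorem 2.) Let (U, X, Z, V) be finitely supported random variables with joint pmf p(u, x, z, v) = p(u|x)·p_{XZ}(x, z)·p(v|z) (Markov chain U–X–Z–V). Let (Ũ, X̃, Z̃, Ṽ) be finitely supported random variables on the same alphabets satisfying (Ũ, X̃) ~ (U, X), (Ṽ, Z̃) ~ (V, Z), and (Ũ, Ṽ) ~ (U, V) (equality of the indicated pairwise distributions). Let (Ū, X̄, Z̄, V̄) be the random variables with joint pmf p(ū, x̄, z̄, v̄) = p_{U|X}(ū|x̄)·p_X(x̄)·p_Z(z̄)·p_{V|Z}(v̄|z̄), i.e., Ū–X̄–Z̄–V̄ with X̄ and Z̄ independent, (X̄, Ū) ~ (X, U) and (Z̄, V̄) ~ (Z, V). Then I((Ũ,Ṽ); (X̃,Z̃)) − I((U,V); (X,Z)) + D(p_{X̃Z̃} ‖ p_X ⊗ p_Z) = D(p_{ŨX̃Z̃Ṽ} ‖ p_{ŪX̄Z̄V̄}) = I((X̃, Ũ); (Z̃, Ṽ)), and this common value is at least I(U; V). -/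

import Mathlib

open scoped BigOperators Classical

namespace Biclustering

variable {α β γ : Type*}

/-- A probability mass function on a finite type. -/
def IsPMF [Fintype α] (p : α → ℝ) : Prop := (∀ a, 0 ≤ p a) ∧ ∑ a, p a = 1

/-- Shannon entropy (in nats) of a pmf on a finite type. -/
noncomputable def ent [Fintype α] (p : α → ℝ) : ℝ := - ∑ a, p a * Real.log (p a)

/-- Pushforward (distribution of `f` under `p`). -/
noncomputable def pmap [Fintype α] (f : α → β) (p : α → ℝ) : β → ℝ :=
  fun b => ∑ a, if f a = b then p a else 0

/-- Entropy of the random variable `f` under the joint pmf `p`. -/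
noncomputable def Hof [Fintype α] [Fintype β] (p : α → ℝ) (f : α → β) : ℝ := ent (pmap f p)

/-- Mutual information `I(f; g)` under the joint pmf `p`. -/
noncomputable def MI [Fintype α] [Fintype β] [Fintype γ] (p : α → ℝ) (f : α → β) (g : α → γ) : ℝ :=
  Hof p f + Hof p g - Hof p (fun a => (f a, g a))

/-- Kullback–Leibler divergence `D(p ‖ q)` (in nats) between pmfs on a finite type. -/
noncomputable def KL [Fintype α] (p q : α → ℝ) : ℝ := ∑ a, p a * Real.log (p a / q a)

/-- The joint pmf `q` of `(U, X, Z, V)` factors as `p(u|x) · p_{XZ}(x,z) · p(v|z)`,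
i.e. the Markov chain `U – X – Z – V` holds with `(X, Z)`-marginal `p`. -/
def LongMarkov {𝒳 𝒵 𝒰 𝒱 : Type} [Fintype 𝒳] [Fintype 𝒵] [Fintype 𝒰] [Fintype 𝒱]
    (p : 𝒳 × 𝒵 → ℝ) (q : 𝒰 × 𝒳 × 𝒵 × 𝒱 → ℝ) : Prop :=
  ∃ (a : 𝒳 → 𝒰 → ℝ) (b : 𝒵 → 𝒱 → ℝ),
    (∀ x u, 0 ≤ a x u) ∧ (∀ x, ∑ u, a x u = 1) ∧
    (∀ z v, 0 ≤ b z v) ∧ (∀ z, ∑ v, b z v = 1) ∧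
    ∀ u x z v, q (u, x, z, v) = a x u * p (x, z) * b z v

set_option linter.unusedSectionVars false

section Helpers

variable [Fintype α] [Fintype β] [Fintype γ]

lemma pmap_nonneg (f : α → β) {r : α → ℝ} (hr : ∀ a, 0 ≤ r a) (b : β) :
    0 ≤ pmap f r b := by
  refine Finset.sum_nonneg fun a _ => ?_
  split_ifs
  exacts [hr a, le_rfl]

lemma sum_pmap_mul (f : α → β) (r : α → ℝ) (φ : β → ℝ) :
    ∑ a, r a * φ (f a) = ∑ b, pmap f r b * φ b := by
  unfold pmap
  simp_rw [Finset.sum_mul, ite_mul, zero_mul]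
  rw [Finset.sum_comm]
  simp

lemma sum_pmap (f : α → β) (r : α → ℝ) : ∑ b, pmap f r b = ∑ a, r a := by
  have h := sum_pmap_mul f r (fun _ => 1)
  simpa using h.symm

lemma le_pmap_apply (f : α → β) {r : α → ℝ} (hr : ∀ a, 0 ≤ r a) (a : α) :
    r a ≤ pmap f r (f a) := by
  unfold pmap
  have := Finset.single_le_sum (f := fun a' => if f a' = f a then r a' else 0)
    (fun i _ => by split_ifs; exacts [hr i, le_rfl]) (Finset.mem_univ a)
  simpa using this

lemma pmap_comp (f : α → β) (g : β → γ) (r : α → ℝ) :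
    pmap g (pmap f r) = pmap (fun a => g (f a)) r := by
  funext c
  have h := sum_pmap_mul f r (fun b => if g b = c then (1:ℝ) else 0)
  unfold pmap
  unfold pmap at h
  simp only [mul_ite, mul_one, mul_zero] at h
  exact h.symm

lemma pmap_apply_injective {f : α → β} (hf : Function.Injective f) (r : α → ℝ) (a : α) :
    pmap f r (f a) = r a := by
  simp [pmap, hf.eq_iff]

lemma ent_pmap_of_injective {f : α → β} (hf : Function.Injective f) (r : α → ℝ) :
    ent (pmap f r) = ent r := by
  unfold ent
  congr 1
  rw [← sum_pmap_mul f r (fun b => Real.log (pmap f r b))]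
  refine Finset.sum_congr rfl fun a _ => ?_
  rw [pmap_apply_injective hf]

lemma Hof_injective {F : α → β} (hF : Function.Injective F) (r : α → ℝ) :
    Hof r F = ent r := ent_pmap_of_injective hF r

lemma Hof_comp_injective (f : α → β) {g : β → γ} (hg : Function.Injective g) (r : α → ℝ) :
    Hof r (fun a => g (f a)) = Hof r f := by
  unfold Hof
  rw [← pmap_comp, ent_pmap_of_injective hg]

lemma sum_mul_log_pmap (f : α → β) (r : α → ℝ) :
    ∑ a, r a * Real.log (pmap f r (f a)) = - Hof r f := by
  rw [sum_pmap_mul f r (fun b => Real.log (pmap f r b))]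
  simp [Hof, ent]

lemma KL_prod_marginals (r : α → ℝ) (hr : ∀ a, 0 ≤ r a) (f1 : α → β) (f2 : α → γ) :
    KL r (fun a => pmap f1 r (f1 a) * pmap f2 r (f2 a))
      = Hof r f1 + Hof r f2 - ent r := by
  unfold KL
  have key : ∀ a, r a * Real.log (r a / (pmap f1 r (f1 a) * pmap f2 r (f2 a)))
      = r a * Real.log (r a) - r a * Real.log (pmap f1 r (f1 a))
        - r a * Real.log (pmap f2 r (f2 a)) := by
    intro a
    rcases eq_or_lt_of_le (hr a) with h | h
    · simp [← h]
    · have h1 : 0 < pmap f1 r (f1 a) := lt_of_lt_of_le h (le_pmap_apply f1 hr a)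
      have h2 : 0 < pmap f2 r (f2 a) := lt_of_lt_of_le h (le_pmap_apply f2 hr a)
      rw [Real.log_div h.ne' (by positivity), Real.log_mul h1.ne' h2.ne']
      ring
  simp_rw [key]
  rw [Finset.sum_sub_distrib, Finset.sum_sub_distrib, sum_mul_log_pmap, sum_mul_log_pmap]
  simp [ent]
  ring

end Helpers

section DPI

variable [Fintype α] [Fintype β] [Fintype γ]

lemma MI_eq_sum (r : α → ℝ) (hr : ∀ a, 0 ≤ r a) (F : α → β) (G : α → γ) :
    MI r F G = ∑ a, r a * Real.log
      (pmap (fun x => (F x, G x)) r (F a, G a) / (pmap F r (F a) * pmap G r (G a))) := by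
  have key : ∀ a, r a * Real.log
      (pmap (fun x => (F x, G x)) r (F a, G a) / (pmap F r (F a) * pmap G r (G a)))
      = r a * Real.log (pmap (fun x => (F x, G x)) r (F a, G a))
        - r a * Real.log (pmap F r (F a)) - r a * Real.log (pmap G r (G a)) := by
    intro a
    rcases eq_or_lt_of_le (hr a) with h | h
    · simp [← h]
    · have h0 : 0 < pmap (fun x => (F x, G x)) r (F a, G a) :=
        lt_of_lt_of_le h (le_pmap_apply (fun x => (F x, G x)) hr a)
      have h1 : 0 < pmap F r (F a) := lt_of_lt_of_le h (le_pmap_apply F hr a)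
      have h2 : 0 < pmap G r (G a) := lt_of_lt_of_le h (le_pmap_apply G hr a)
      rw [Real.log_div h0.ne' (by positivity), Real.log_mul h1.ne' h2.ne']
      ring
  simp_rw [key]
  rw [Finset.sum_sub_distrib, Finset.sum_sub_distrib, sum_mul_log_pmap, sum_mul_log_pmap,
    sum_mul_log_pmap G r]
  unfold MI
  ring

lemma MI_comp_le {β' γ' : Type*} [Fintype β'] [Fintype γ']
    (r : α → ℝ) (hr : IsPMF r) (F : α → β) (G : α → γ) (s : β → β') (t : γ → γ') :
    MI r (fun a => s (F a)) (fun a => t (G a)) ≤ MI r F G := by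
  obtain ⟨hr0, hr1⟩ := hr
  set P1 := pmap (fun x => (F x, G x)) r with hP1
  set P2 := pmap (fun x => (s (F x), t (G x))) r with hP2
  set QF := pmap F r with hQF
  set QG := pmap G r with hQG
  set RF := pmap (fun a => s (F a)) r with hRF
  set RG := pmap (fun a => t (G a)) r with hRG
  have hRFc : pmap s QF = RF := by rw [hQF, hRF, pmap_comp]
  have hRGc : pmap t QG = RG := by rw [hQG, hRG, pmap_comp]
  have hQFpos : ∀ b, 0 ≤ QF b := fun b => pmap_nonneg F hr0 b
  have hQGpos : ∀ c, 0 ≤ QG c := fun c => pmap_nonneg G hr0 c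
  have hP1pos : ∀ bc, 0 ≤ P1 bc := fun bc => pmap_nonneg _ hr0 bc
  have hP2pos : ∀ bc, 0 ≤ P2 bc := fun bc => pmap_nonneg _ hr0 bc
  have hRFpos : ∀ b', 0 ≤ RF b' := fun b' => pmap_nonneg _ hr0 b'
  have hRGpos : ∀ c', 0 ≤ RG c' := fun c' => pmap_nonneg _ hr0 c'
  have hP1QF : ∀ bc : β × γ, P1 bc ≤ QF bc.1 := by
    intro bc
    have h1 : pmap Prod.fst P1 = QF := by rw [hP1, hQF, pmap_comp]
    have h2 := le_pmap_apply (r := P1) Prod.fst hP1pos bc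
    rwa [h1] at h2
  have hP2RF : ∀ bc : β' × γ', P2 bc ≤ RF bc.1 := by
    intro bc
    have h1 : pmap Prod.fst P2 = RF := by rw [hP2, hRF, pmap_comp]
    have h2 := le_pmap_apply (r := P2) Prod.fst hP2pos bc
    rwa [h1] at h2
  have hP2RG : ∀ bc : β' × γ', P2 bc ≤ RG bc.2 := by
    intro bc
    have h1 : pmap Prod.snd P2 = RG := by rw [hP2, hRG, pmap_comp]
    have h2 := le_pmap_apply (r := P2) Prod.snd hP2pos bc
    rwa [h1] at h2
  rw [MI_eq_sum r hr0 F G, MI_eq_sum r hr0 (fun a => s (F a)) (fun a => t (G a))]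
  rw [← sub_nonneg, ← Finset.sum_sub_distrib]
  have key : ∀ a, r a - r a * (QF (F a) * QG (G a) * P2 (s (F a), t (G a))
        / (P1 (F a, G a) * RF (s (F a)) * RG (t (G a))))
      ≤ r a * Real.log (P1 (F a, G a) / (QF (F a) * QG (G a)))
        - r a * Real.log (P2 (s (F a), t (G a)) / (RF (s (F a)) * RG (t (G a)))) := by
    intro a
    rcases eq_or_lt_of_le (hr0 a) with h | h
    · simp [← h]
    · have h0 : 0 < P1 (F a, G a) := lt_of_lt_of_le h (le_pmap_apply _ hr0 a)
      have h1 : 0 < QF (F a) := lt_of_lt_of_le h (le_pmap_apply _ hr0 a)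
      have h2 : 0 < QG (G a) := lt_of_lt_of_le h (le_pmap_apply _ hr0 a)
      have h3 : 0 < P2 (s (F a), t (G a)) := lt_of_lt_of_le h (le_pmap_apply _ hr0 a)
      have h4 : 0 < RF (s (F a)) := lt_of_lt_of_le h (le_pmap_apply _ hr0 a)
      have h5 : 0 < RG (t (G a)) := lt_of_lt_of_le h (le_pmap_apply _ hr0 a)
      set X : ℝ := P1 (F a, G a) * RF (s (F a)) * RG (t (G a))
        / (QF (F a) * QG (G a) * P2 (s (F a), t (G a))) with hX
      have hXpos : 0 < X := by rw [hX]; positivity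
      have l1 : Real.log (P1 (F a, G a) / (QF (F a) * QG (G a)))
          = Real.log (P1 (F a, G a)) - (Real.log (QF (F a)) + Real.log (QG (G a))) := by
        rw [Real.log_div h0.ne' (by positivity), Real.log_mul h1.ne' h2.ne']
      have l2 : Real.log (P2 (s (F a), t (G a)) / (RF (s (F a)) * RG (t (G a))))
          = Real.log (P2 (s (F a), t (G a)))
            - (Real.log (RF (s (F a))) + Real.log (RG (t (G a)))) := by
        rw [Real.log_div h3.ne' (by positivity), Real.log_mul h4.ne' h5.ne']
      have lX : Real.log X = (Real.log (P1 (F a, G a)) + Real.log (RF (s (F a)))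
            + Real.log (RG (t (G a)))) - (Real.log (QF (F a)) + Real.log (QG (G a))
            + Real.log (P2 (s (F a), t (G a)))) := by
        rw [hX, Real.log_div (by positivity) (by positivity),
          Real.log_mul (mul_pos h0 h4).ne' h5.ne', Real.log_mul h0.ne' h4.ne',
          Real.log_mul (mul_pos h1 h2).ne' h3.ne', Real.log_mul h1.ne' h2.ne']
      have hbound : 1 - X⁻¹ ≤ Real.log X := by
        have hb := Real.log_le_sub_one_of_pos (x := X⁻¹) (by positivity)
        rw [Real.log_inv] at hb
        linarith
      have hXinv : X⁻¹ = QF (F a) * QG (G a) * P2 (s (F a), t (G a))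
          / (P1 (F a, G a) * RF (s (F a)) * RG (t (G a))) := by
        rw [hX]
        rw [inv_div]
      have hfin : r a * (1 - X⁻¹) ≤ r a * Real.log X :=
        mul_le_mul_of_nonneg_left hbound (le_of_lt h)
      rw [hXinv] at hfin
      rw [l1, l2]
      nlinarith [hfin, lX]
  refine le_trans ?_ (Finset.sum_le_sum fun a (_ : a ∈ Finset.univ) => key a)
  rw [Finset.sum_sub_distrib, hr1, sub_nonneg]
  have hψ : ∑ a, r a * (QF (F a) * QG (G a) * P2 (s (F a), t (G a))
        / (P1 (F a, G a) * RF (s (F a)) * RG (t (G a))))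
      = ∑ bc : β × γ, P1 bc * (QF bc.1 * QG bc.2 * P2 (s bc.1, t bc.2)
        / (P1 bc * RF (s bc.1) * RG (t bc.2))) :=
    sum_pmap_mul (fun x => (F x, G x)) r
      (fun bc => QF bc.1 * QG bc.2 * P2 (s bc.1, t bc.2) / (P1 bc * RF (s bc.1) * RG (t bc.2)))
  rw [hψ]
  have step1 : ∑ bc : β × γ, P1 bc * (QF bc.1 * QG bc.2 * P2 (s bc.1, t bc.2)
        / (P1 bc * RF (s bc.1) * RG (t bc.2)))
      ≤ ∑ bc : β × γ, QF bc.1 * (QG bc.2 * (P2 (s bc.1, t bc.2)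
        / (RF (s bc.1) * RG (t bc.2)))) := by
    refine Finset.sum_le_sum fun bc _ => ?_
    rcases eq_or_lt_of_le (hP1pos bc) with h | h
    · rw [← h, zero_mul]
      have h1 := hQFpos bc.1
      have h2 := hQGpos bc.2
      have h3 := hP2pos (s bc.1, t bc.2)
      have h4 := hRFpos (s bc.1)
      have h5 := hRGpos (t bc.2)
      positivity
    · have h4 : 0 < RF (s bc.1) := by
        have := le_pmap_apply (r := QF) s hQFpos bc.1
        rw [hRFc] at this
        exact lt_of_lt_of_le (lt_of_lt_of_le h (hP1QF bc)) this
      have h5 : 0 < RG (t bc.2) := by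
        have h1 : pmap Prod.snd P1 = QG := by rw [hP1, hQG, pmap_comp]
        have h2 := le_pmap_apply (r := P1) Prod.snd hP1pos bc
        rw [h1] at h2
        have h3 := le_pmap_apply (r := QG) t hQGpos bc.2
        rw [hRGc] at h3
        exact lt_of_lt_of_le (lt_of_lt_of_le h h2) h3
      refine le_of_eq ?_
      field_simp
  refine le_trans step1 ?_
  have step2 : ∑ bc : β × γ, QF bc.1 * (QG bc.2 * (P2 (s bc.1, t bc.2)
        / (RF (s bc.1) * RG (t bc.2))))
      = ∑ bc' : β' × γ', RF bc'.1 * (RG bc'.2 * (P2 (bc'.1, bc'.2)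
        / (RF bc'.1 * RG bc'.2))) := by
    rw [Fintype.sum_prod_type, Fintype.sum_prod_type]
    have inner : ∀ b', (∑ c, QG c * (P2 (b', t c) / (RF b' * RG (t c))))
        = ∑ c', RG c' * (P2 (b', c') / (RF b' * RG c')) := by
      intro b'
      rw [sum_pmap_mul t QG (fun c' => P2 (b', c') / (RF b' * RG c')), hRGc]
    calc ∑ b, ∑ c, QF b * (QG c * (P2 (s b, t c) / (RF (s b) * RG (t c))))
        = ∑ b, QF b * ∑ c', RG c' * (P2 (s b, c') / (RF (s b) * RG c')) := by
          refine Finset.sum_congr rfl fun b _ => ?_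
          rw [← Finset.mul_sum, inner (s b)]
      _ = ∑ b', RF b' * ∑ c', RG c' * (P2 (b', c') / (RF b' * RG c')) := by
          rw [sum_pmap_mul s QF
            (fun b' => ∑ c', RG c' * (P2 (b', c') / (RF b' * RG c'))), hRFc]
      _ = _ := by
          refine Finset.sum_congr rfl fun b' _ => ?_
          rw [Finset.mul_sum]
  rw [step2]
  have step3 : ∑ bc' : β' × γ', RF bc'.1 * (RG bc'.2 * (P2 (bc'.1, bc'.2)
        / (RF bc'.1 * RG bc'.2))) ≤ ∑ bc' : β' × γ', P2 bc' := by
    refine Finset.sum_le_sum fun bc' _ => ?_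
    rcases eq_or_lt_of_le (hRFpos bc'.1) with h | h
    · rw [← h, zero_mul]
      exact hP2pos bc'
    rcases eq_or_lt_of_le (hRGpos bc'.2) with h2 | h2
    · rw [← h2, zero_mul, mul_zero]
      exact hP2pos bc'
    · have : RF bc'.1 * (RG bc'.2 * (P2 (bc'.1, bc'.2) / (RF bc'.1 * RG bc'.2)))
          = P2 bc' := by
        field_simp
      rw [this]
  refine le_trans step3 ?_
  rw [hP2, sum_pmap, hr1]

end DPI

section Markov

lemma sum_ite_push {ι : Type*} [Fintype ι] (c : Prop) [Decidable c] (f : ι → ℝ) :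
    (∑ i, if c then f i else 0) = if c then ∑ i, f i else 0 := by
  split_ifs <;> simp

variable {𝒰 𝒳 𝒵 𝒱 : Type} [Fintype 𝒰] [Fintype 𝒳] [Fintype 𝒵] [Fintype 𝒱]

lemma pmap_fst_apply (p : 𝒳 × 𝒵 → ℝ) (x : 𝒳) :
    pmap Prod.fst p x = ∑ z, p (x, z) := by
  rw [pmap, Fintype.sum_prod_type]
  dsimp only
  convert_to (∑ x_1, ∑ y, if x_1 = x then p (x_1, y) else 0) = _; simp only [sum_ite_push]
  simp

lemma pmap_snd_apply (p : 𝒳 × 𝒵 → ℝ) (z : 𝒵) :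
    pmap Prod.snd p z = ∑ x, p (x, z) := by
  rw [pmap, Fintype.sum_prod_type, Finset.sum_comm]
  dsimp only
  convert_to (∑ y, ∑ x_1, if y = z then p (x_1, y) else 0) = _; simp only [sum_ite_push]
  simp

variable (p : 𝒳 × 𝒵 → ℝ) (a : 𝒳 → 𝒰 → ℝ) (b : 𝒵 → 𝒱 → ℝ) (q : 𝒰 × 𝒳 × 𝒵 × 𝒱 → ℝ)

lemma markov_pmap_XZ (ha1 : ∀ x, ∑ u, a x u = 1) (hb1 : ∀ z, ∑ v, b z v = 1)
    (hqf : ∀ u x z v, q (u, x, z, v) = a x u * p (x, z) * b z v) :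
    pmap (fun w => (w.2.1, w.2.2.1)) q = p := by
  funext xz
  obtain ⟨x, z⟩ := xz
  simp only [pmap, Fintype.sum_prod_type, hqf, Prod.mk.injEq, ite_and,
    sum_ite_push, Finset.sum_ite_eq, Finset.sum_ite_eq', Finset.sum_const_zero,
    Finset.mem_univ, if_true]
  simp_rw [← Finset.mul_sum, hb1, mul_one, ← Finset.sum_mul, ha1, one_mul]

lemma markov_pmap_UX (ha1 : ∀ x, ∑ u, a x u = 1) (hb1 : ∀ z, ∑ v, b z v = 1)
    (hqf : ∀ u x z v, q (u, x, z, v) = a x u * p (x, z) * b z v) :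
    pmap (fun w => (w.1, w.2.1)) q = fun ux => a ux.2 ux.1 * pmap Prod.fst p ux.2 := by
  funext ux
  obtain ⟨u, x⟩ := ux
  show pmap (fun w => (w.1, w.2.1)) q (u, x) = a x u * pmap Prod.fst p x
  rw [pmap_fst_apply]
  simp only [pmap, Fintype.sum_prod_type, hqf, Prod.mk.injEq, ite_and,
    sum_ite_push, Finset.sum_ite_eq, Finset.sum_ite_eq', Finset.sum_const_zero,
    Finset.mem_univ, if_true]
  simp_rw [← Finset.mul_sum, hb1, mul_one]
  rw [← Finset.mul_sum]

lemma markov_pmap_ZV (ha1 : ∀ x, ∑ u, a x u = 1) (hb1 : ∀ z, ∑ v, b z v = 1)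
    (hqf : ∀ u x z v, q (u, x, z, v) = a x u * p (x, z) * b z v) :
    pmap (fun w => (w.2.2.1, w.2.2.2)) q = fun zv => pmap Prod.snd p zv.1 * b zv.1 zv.2 := by
  funext zv
  obtain ⟨z, v⟩ := zv
  show pmap (fun w => (w.2.2.1, w.2.2.2)) q (z, v) = pmap Prod.snd p z * b z v
  rw [pmap_snd_apply]
  simp only [pmap, Fintype.sum_prod_type, hqf, Prod.mk.injEq, ite_and,
    sum_ite_push, Finset.sum_ite_eq, Finset.sum_ite_eq', Finset.sum_const_zero,
    Finset.mem_univ, if_true]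
  rw [Finset.sum_comm]
  simp_rw [mul_assoc, ← Finset.sum_mul, ha1, one_mul]
  rw [← Finset.sum_mul]

end Markov

section Chain

variable {𝒰 𝒳 𝒵 𝒱 : Type} [Fintype 𝒰] [Fintype 𝒳] [Fintype 𝒵] [Fintype 𝒱]
variable (p : 𝒳 × 𝒵 → ℝ) (a : 𝒳 → 𝒰 → ℝ) (b : 𝒵 → 𝒱 → ℝ) (q : 𝒰 × 𝒳 × 𝒵 × 𝒱 → ℝ)

lemma ent_markov (hp0 : ∀ xz, 0 ≤ p xz)
    (ha0 : ∀ x u, 0 ≤ a x u) (ha1 : ∀ x, ∑ u, a x u = 1)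
    (hb0 : ∀ z v, 0 ≤ b z v) (hb1 : ∀ z, ∑ v, b z v = 1)
    (hqf : ∀ u x z v, q (u, x, z, v) = a x u * p (x, z) * b z v) :
    ent q = Hof q (fun w => (w.1, w.2.1)) + Hof q (fun w => (w.2.1, w.2.2.1))
          + Hof q (fun w => (w.2.2.1, w.2.2.2)) - Hof q (fun w => w.2.1)
          - Hof q (fun w => w.2.2.1) := by
  have hXZ := markov_pmap_XZ p a b q ha1 hb1 hqf
  have hUXm := markov_pmap_UX p a b q ha1 hb1 hqf
  have hZVm := markov_pmap_ZV p a b q ha1 hb1 hqf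
  have hx : pmap (fun w : 𝒰 × 𝒳 × 𝒵 × 𝒱 => w.2.1) q = pmap Prod.fst p := by
    have h1 : pmap Prod.fst (pmap (fun w : 𝒰 × 𝒳 × 𝒵 × 𝒱 => (w.2.1, w.2.2.1)) q)
        = pmap Prod.fst p := by rw [hXZ]
    rw [pmap_comp] at h1
    exact h1
  have hz : pmap (fun w : 𝒰 × 𝒳 × 𝒵 × 𝒱 => w.2.2.1) q = pmap Prod.snd p := by
    have h1 : pmap Prod.snd (pmap (fun w : 𝒰 × 𝒳 × 𝒵 × 𝒱 => (w.2.1, w.2.2.1)) q)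
        = pmap Prod.snd p := by rw [hXZ]
    rw [pmap_comp] at h1
    exact h1
  have key : ∀ w : 𝒰 × 𝒳 × 𝒵 × 𝒱, q w * Real.log (q w)
      = q w * Real.log (pmap (fun w' => (w'.1, w'.2.1)) q (w.1, w.2.1))
        + q w * Real.log (pmap (fun w' => (w'.2.1, w'.2.2.1)) q (w.2.1, w.2.2.1))
        + q w * Real.log (pmap (fun w' => (w'.2.2.1, w'.2.2.2)) q (w.2.2.1, w.2.2.2))
        - q w * Real.log (pmap (fun w' : 𝒰 × 𝒳 × 𝒵 × 𝒱 => w'.2.1) q w.2.1)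
        - q w * Real.log (pmap (fun w' : 𝒰 × 𝒳 × 𝒵 × 𝒱 => w'.2.2.1) q w.2.2.1) := by
    rintro ⟨u, x, z, v⟩
    simp only [hXZ, hUXm, hZVm, hx, hz, hqf]
    by_cases h : a x u * p (x, z) * b z v = 0
    · rw [h]; simp
    · obtain ⟨hab, hbv⟩ := mul_ne_zero_iff.mp h
      obtain ⟨hax, hpx⟩ := mul_ne_zero_iff.mp hab
      have hA : 0 < a x u := lt_of_le_of_ne (ha0 x u) (Ne.symm hax)
      have hP : 0 < p (x, z) := lt_of_le_of_ne (hp0 _) (Ne.symm hpx)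
      have hB : 0 < b z v := lt_of_le_of_ne (hb0 z v) (Ne.symm hbv)
      have hPX : 0 < pmap Prod.fst p x :=
        lt_of_lt_of_le hP (le_pmap_apply (r := p) Prod.fst hp0 (x, z))
      have hPZ : 0 < pmap Prod.snd p z :=
        lt_of_lt_of_le hP (le_pmap_apply (r := p) Prod.snd hp0 (x, z))
      rw [Real.log_mul (mul_ne_zero hax hpx) hbv, Real.log_mul hax hpx,
        Real.log_mul hax hPX.ne', Real.log_mul hPZ.ne' hbv]
      ring
  have expand : ent q
      = - (∑ w, (q w * Real.log (pmap (fun w' => (w'.1, w'.2.1)) q (w.1, w.2.1))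
        + q w * Real.log (pmap (fun w' => (w'.2.1, w'.2.2.1)) q (w.2.1, w.2.2.1))
        + q w * Real.log (pmap (fun w' => (w'.2.2.1, w'.2.2.2)) q (w.2.2.1, w.2.2.2))
        - q w * Real.log (pmap (fun w' : 𝒰 × 𝒳 × 𝒵 × 𝒱 => w'.2.1) q w.2.1)
        - q w * Real.log (pmap (fun w' : 𝒰 × 𝒳 × 𝒵 × 𝒱 => w'.2.2.1) q w.2.2.1))) := by
    unfold ent
    congr 1
    exact Finset.sum_congr rfl fun w _ => key w
  rw [expand]
  rw [Finset.sum_sub_distrib, Finset.sum_sub_distrib, Finset.sum_add_distrib,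
    Finset.sum_add_distrib]
  have e1 : (∑ w : 𝒰 × 𝒳 × 𝒵 × 𝒱,
      q w * Real.log (pmap (fun w' => (w'.1, w'.2.1)) q (w.1, w.2.1)))
      = - Hof q (fun w => (w.1, w.2.1)) := sum_mul_log_pmap _ q
  have e2 : (∑ w : 𝒰 × 𝒳 × 𝒵 × 𝒱,
      q w * Real.log (pmap (fun w' => (w'.2.1, w'.2.2.1)) q (w.2.1, w.2.2.1)))
      = - Hof q (fun w => (w.2.1, w.2.2.1)) := sum_mul_log_pmap _ q
  have e3 : (∑ w : 𝒰 × 𝒳 × 𝒵 × 𝒱,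
      q w * Real.log (pmap (fun w' => (w'.2.2.1, w'.2.2.2)) q (w.2.2.1, w.2.2.2)))
      = - Hof q (fun w => (w.2.2.1, w.2.2.2)) := sum_mul_log_pmap _ q
  have e4 : (∑ w : 𝒰 × 𝒳 × 𝒵 × 𝒱,
      q w * Real.log (pmap (fun w' : 𝒰 × 𝒳 × 𝒵 × 𝒱 => w'.2.1) q w.2.1))
      = - Hof q (fun w => w.2.1) := sum_mul_log_pmap _ q
  have e5 : (∑ w : 𝒰 × 𝒳 × 𝒵 × 𝒱,
      q w * Real.log (pmap (fun w' : 𝒰 × 𝒳 × 𝒵 × 𝒱 => w'.2.2.1) q w.2.2.1))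
      = - Hof q (fun w => w.2.2.1) := sum_mul_log_pmap _ q
  rw [e1, e2, e3, e4, e5]
  ring

end Chain

/-- **Identity for marginal-matched tuples (key step in the proof of Theorem 2):**
let `q ~ (U, X, Z, V)` with `U – X – Z – V` and `(X,Z)`-marginal `p`, and let
`qt ~ (Ũ, X̃, Z̃, Ṽ)` match the `(U,X)`, `(V,Z)` and `(U,V)` marginals of `q`.  With
`q̄(u,x,z,v) = p_{UX}(u,x)·p_{ZV}(z,v)` (i.e. `Ū – X̄ – Z̄ – V̄` with `X̄ ⫫ Z̄`,
`(X̄,Ū) ~ (X,U)`, `(Z̄,V̄) ~ (Z,V)`), the quantity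
`I_{q̃}((Ũ,Ṽ);(X̃,Z̃)) − I_q((U,V);(X,Z)) + D(p_{X̃Z̃} ‖ p_X ⊗ p_Z)` equals both
`D(q̃ ‖ q̄)` and `I_{q̃}((X̃,Ũ);(Z̃,Ṽ))`, and is at least `I_q(U;V)`. -/
theorem marginal_matched_identity
    {𝒰 𝒳 𝒵 𝒱 : Type} [Fintype 𝒰] [Fintype 𝒳] [Fintype 𝒵] [Fintype 𝒱]
    (p : 𝒳 × 𝒵 → ℝ) (hp : IsPMF p)
    (q : 𝒰 × 𝒳 × 𝒵 × 𝒱 → ℝ) (hq : LongMarkov p q)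
    (qt : 𝒰 × 𝒳 × 𝒵 × 𝒱 → ℝ) (hqt : IsPMF qt)
    (hUX : pmap (fun w => (w.1, w.2.1)) qt = pmap (fun w => (w.1, w.2.1)) q)
    (hVZ : pmap (fun w => (w.2.2.2, w.2.2.1)) qt = pmap (fun w => (w.2.2.2, w.2.2.1)) q)
    (hUV : pmap (fun w => (w.1, w.2.2.2)) qt = pmap (fun w => (w.1, w.2.2.2)) q) :
    MI qt (fun w => (w.1, w.2.2.2)) (fun w => (w.2.1, w.2.2.1))
        - MI q (fun w => (w.1, w.2.2.2)) (fun w => (w.2.1, w.2.2.1))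
        + KL (pmap (fun w => (w.2.1, w.2.2.1)) qt)
            (fun xz => pmap Prod.fst p xz.1 * pmap Prod.snd p xz.2)
      = KL qt (fun w => pmap (fun w' => (w'.1, w'.2.1)) q (w.1, w.2.1)
                * pmap (fun w' => (w'.2.2.1, w'.2.2.2)) q (w.2.2.1, w.2.2.2)) ∧
    MI qt (fun w => (w.1, w.2.2.2)) (fun w => (w.2.1, w.2.2.1))
        - MI q (fun w => (w.1, w.2.2.2)) (fun w => (w.2.1, w.2.2.1))
        + KL (pmap (fun w => (w.2.1, w.2.2.1)) qt)
            (fun xz => pmap Prod.fst p xz.1 * pmap Prod.snd p xz.2)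
      = MI qt (fun w => (w.2.1, w.1)) (fun w => (w.2.2.1, w.2.2.2)) ∧
    MI q (fun w => w.1) (fun w => w.2.2.2)
      ≤ MI qt (fun w => (w.1, w.2.2.2)) (fun w => (w.2.1, w.2.2.1))
        - MI q (fun w => (w.1, w.2.2.2)) (fun w => (w.2.1, w.2.2.1))
        + KL (pmap (fun w => (w.2.1, w.2.2.1)) qt)
            (fun xz => pmap Prod.fst p xz.1 * pmap Prod.snd p xz.2) := by
  obtain ⟨hp0, hp1⟩ := hp
  obtain ⟨a, b, ha0, ha1, hb0, hb1, hqf⟩ := hq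
  obtain ⟨hqt0, hqt1⟩ := hqt
  -- marginal identities
  have hXZq : pmap (fun w : 𝒰 × 𝒳 × 𝒵 × 𝒱 => (w.2.1, w.2.2.1)) q = p :=
    markov_pmap_XZ p a b q ha1 hb1 hqf
  have hZVt : pmap (fun w : 𝒰 × 𝒳 × 𝒵 × 𝒱 => (w.2.2.1, w.2.2.2)) qt
      = pmap (fun w => (w.2.2.1, w.2.2.2)) q := by
    have h1 : pmap Prod.swap (pmap (fun w : 𝒰 × 𝒳 × 𝒵 × 𝒱 => (w.2.2.2, w.2.2.1)) qt)
        = pmap Prod.swap (pmap (fun w : 𝒰 × 𝒳 × 𝒵 × 𝒱 => (w.2.2.2, w.2.2.1)) q) := by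
      rw [hVZ]
    rw [pmap_comp, pmap_comp] at h1
    exact h1
  have hXt : pmap (fun w : 𝒰 × 𝒳 × 𝒵 × 𝒱 => w.2.1) qt = pmap Prod.fst p := by
    have h1 : pmap Prod.snd (pmap (fun w : 𝒰 × 𝒳 × 𝒵 × 𝒱 => (w.1, w.2.1)) qt)
        = pmap Prod.snd (pmap (fun w : 𝒰 × 𝒳 × 𝒵 × 𝒱 => (w.1, w.2.1)) q) := by rw [hUX]
    rw [pmap_comp, pmap_comp] at h1
    have h2 : pmap Prod.fst (pmap (fun w : 𝒰 × 𝒳 × 𝒵 × 𝒱 => (w.2.1, w.2.2.1)) q)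
        = pmap Prod.fst p := by rw [hXZq]
    rw [pmap_comp] at h2
    exact h1.trans h2
  have hZt : pmap (fun w : 𝒰 × 𝒳 × 𝒵 × 𝒱 => w.2.2.1) qt = pmap Prod.snd p := by
    have h1 : pmap Prod.fst (pmap (fun w : 𝒰 × 𝒳 × 𝒵 × 𝒱 => (w.2.2.1, w.2.2.2)) qt)
        = pmap Prod.fst (pmap (fun w : 𝒰 × 𝒳 × 𝒵 × 𝒱 => (w.2.2.1, w.2.2.2)) q) := by rw [hZVt]
    rw [pmap_comp, pmap_comp] at h1
    have h2 : pmap Prod.snd (pmap (fun w : 𝒰 × 𝒳 × 𝒵 × 𝒱 => (w.2.1, w.2.2.1)) q)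
        = pmap Prod.snd p := by rw [hXZq]
    rw [pmap_comp] at h2
    exact h1.trans h2
  have hXq : pmap (fun w : 𝒰 × 𝒳 × 𝒵 × 𝒱 => w.2.1) q = pmap Prod.fst p := by
    have h2 : pmap Prod.fst (pmap (fun w : 𝒰 × 𝒳 × 𝒵 × 𝒱 => (w.2.1, w.2.2.1)) q)
        = pmap Prod.fst p := by rw [hXZq]
    rw [pmap_comp] at h2
    exact h2
  have hZq : pmap (fun w : 𝒰 × 𝒳 × 𝒵 × 𝒱 => w.2.2.1) q = pmap Prod.snd p := by
    have h2 : pmap Prod.snd (pmap (fun w : 𝒰 × 𝒳 × 𝒵 × 𝒱 => (w.2.1, w.2.2.1)) q)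
        = pmap Prod.snd p := by rw [hXZq]
    rw [pmap_comp] at h2
    exact h2
  have hUt : pmap (fun w : 𝒰 × 𝒳 × 𝒵 × 𝒱 => w.1) qt = pmap (fun w => w.1) q := by
    have h1 : pmap Prod.fst (pmap (fun w : 𝒰 × 𝒳 × 𝒵 × 𝒱 => (w.1, w.2.2.2)) qt)
        = pmap Prod.fst (pmap (fun w : 𝒰 × 𝒳 × 𝒵 × 𝒱 => (w.1, w.2.2.2)) q) := by rw [hUV]
    rw [pmap_comp, pmap_comp] at h1
    exact h1
  have hVt : pmap (fun w : 𝒰 × 𝒳 × 𝒵 × 𝒱 => w.2.2.2) qt = pmap (fun w => w.2.2.2) q := by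
    have h1 : pmap Prod.snd (pmap (fun w : 𝒰 × 𝒳 × 𝒵 × 𝒱 => (w.1, w.2.2.2)) qt)
        = pmap Prod.snd (pmap (fun w : 𝒰 × 𝒳 × 𝒵 × 𝒱 => (w.1, w.2.2.2)) q) := by rw [hUV]
    rw [pmap_comp, pmap_comp] at h1
    exact h1
  -- injectivity of the joint maps
  have inj1 : Function.Injective
      (fun w : 𝒰 × 𝒳 × 𝒵 × 𝒱 => ((w.1, w.2.2.2), (w.2.1, w.2.2.1))) := by
    rintro ⟨u, x, z, v⟩ ⟨u', x', z', v'⟩ h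
    simp only [Prod.mk.injEq] at h
    obtain ⟨⟨h1, h2⟩, h3, h4⟩ := h
    simp_all
  have inj2 : Function.Injective
      (fun w : 𝒰 × 𝒳 × 𝒵 × 𝒱 => ((w.2.1, w.1), (w.2.2.1, w.2.2.2))) := by
    rintro ⟨u, x, z, v⟩ ⟨u', x', z', v'⟩ h
    simp only [Prod.mk.injEq] at h
    obtain ⟨⟨h1, h2⟩, h3, h4⟩ := h
    simp_all
  -- MI expansions
  have eMIt : MI qt (fun w => (w.1, w.2.2.2)) (fun w => (w.2.1, w.2.2.1))
      = Hof qt (fun w => (w.1, w.2.2.2)) + Hof qt (fun w => (w.2.1, w.2.2.1)) - ent qt := by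
    show Hof qt (fun w => (w.1, w.2.2.2)) + Hof qt (fun w => (w.2.1, w.2.2.1))
        - Hof qt (fun w : 𝒰 × 𝒳 × 𝒵 × 𝒱 => ((w.1, w.2.2.2), (w.2.1, w.2.2.1))) = _
    rw [Hof_injective inj1 qt]
  have eMIq : MI q (fun w => (w.1, w.2.2.2)) (fun w => (w.2.1, w.2.2.1))
      = Hof q (fun w => (w.1, w.2.2.2)) + Hof q (fun w => (w.2.1, w.2.2.1)) - ent q := by
    show Hof q (fun w => (w.1, w.2.2.2)) + Hof q (fun w => (w.2.1, w.2.2.1))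
        - Hof q (fun w : 𝒰 × 𝒳 × 𝒵 × 𝒱 => ((w.1, w.2.2.2), (w.2.1, w.2.2.1))) = _
    rw [Hof_injective inj1 q]
  have eMIt2 : MI qt (fun w => (w.2.1, w.1)) (fun w => (w.2.2.1, w.2.2.2))
      = Hof qt (fun w => (w.2.1, w.1)) + Hof qt (fun w => (w.2.2.1, w.2.2.2)) - ent qt := by
    show Hof qt (fun w => (w.2.1, w.1)) + Hof qt (fun w => (w.2.2.1, w.2.2.2))
        - Hof qt (fun w : 𝒰 × 𝒳 × 𝒵 × 𝒱 => ((w.2.1, w.1), (w.2.2.1, w.2.2.2))) = _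
    rw [Hof_injective inj2 qt]
  -- KL expansions
  have k1 : KL qt (fun w => pmap (fun w' => (w'.1, w'.2.1)) q (w.1, w.2.1)
        * pmap (fun w' => (w'.2.2.1, w'.2.2.2)) q (w.2.2.1, w.2.2.2))
      = Hof qt (fun w => (w.1, w.2.1)) + Hof qt (fun w => (w.2.2.1, w.2.2.2)) - ent qt := by
    rw [← hUX, ← hZVt]
    exact KL_prod_marginals qt hqt0 (fun w => (w.1, w.2.1)) (fun w => (w.2.2.1, w.2.2.2))
  have k2 : KL (pmap (fun w => (w.2.1, w.2.2.1)) qt)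
        (fun xz => pmap Prod.fst p xz.1 * pmap Prod.snd p xz.2)
      = ent (pmap Prod.fst p) + ent (pmap Prod.snd p)
        - Hof qt (fun w => (w.2.1, w.2.2.1)) := by
    have hfst : pmap Prod.fst (pmap (fun w : 𝒰 × 𝒳 × 𝒵 × 𝒱 => (w.2.1, w.2.2.1)) qt)
        = pmap Prod.fst p := by rw [pmap_comp]; exact hXt
    have hsnd : pmap Prod.snd (pmap (fun w : 𝒰 × 𝒳 × 𝒵 × 𝒱 => (w.2.1, w.2.2.1)) qt)
        = pmap Prod.snd p := by rw [pmap_comp]; exact hZt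
    have h := KL_prod_marginals (pmap (fun w : 𝒰 × 𝒳 × 𝒵 × 𝒱 => (w.2.1, w.2.2.1)) qt)
      (pmap_nonneg _ hqt0) Prod.fst Prod.snd
    rw [hfst, hsnd] at h
    rw [h]
    show ent (pmap Prod.fst (pmap (fun w : 𝒰 × 𝒳 × 𝒵 × 𝒱 => (w.2.1, w.2.2.1)) qt))
        + ent (pmap Prod.snd (pmap (fun w : 𝒰 × 𝒳 × 𝒵 × 𝒱 => (w.2.1, w.2.2.1)) qt))
        - ent (pmap (fun w : 𝒰 × 𝒳 × 𝒵 × 𝒱 => (w.2.1, w.2.2.1)) qt) = _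
    rw [hfst, hsnd]
    rfl
  -- entropy transfers
  have tUV : Hof qt (fun w : 𝒰 × 𝒳 × 𝒵 × 𝒱 => (w.1, w.2.2.2))
      = Hof q (fun w => (w.1, w.2.2.2)) := by unfold Hof; rw [hUV]
  have tUXh : Hof qt (fun w : 𝒰 × 𝒳 × 𝒵 × 𝒱 => (w.1, w.2.1))
      = Hof q (fun w => (w.1, w.2.1)) := by unfold Hof; rw [hUX]
  have tZVh : Hof qt (fun w : 𝒰 × 𝒳 × 𝒵 × 𝒱 => (w.2.2.1, w.2.2.2))
      = Hof q (fun w => (w.2.2.1, w.2.2.2)) := by unfold Hof; rw [hZVt]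
  have tXU : Hof qt (fun w : 𝒰 × 𝒳 × 𝒵 × 𝒱 => (w.2.1, w.1))
      = Hof qt (fun w => (w.1, w.2.1)) :=
    Hof_comp_injective (fun w : 𝒰 × 𝒳 × 𝒵 × 𝒱 => (w.1, w.2.1)) Prod.swap_injective qt
  have tX : Hof q (fun w : 𝒰 × 𝒳 × 𝒵 × 𝒱 => w.2.1) = ent (pmap Prod.fst p) := by
    unfold Hof; rw [hXq]
  have tZ : Hof q (fun w : 𝒰 × 𝒳 × 𝒵 × 𝒱 => w.2.2.1) = ent (pmap Prod.snd p) := by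
    unfold Hof; rw [hZq]
  have tU : Hof qt (fun w : 𝒰 × 𝒳 × 𝒵 × 𝒱 => w.1) = Hof q (fun w => w.1) := by
    unfold Hof; rw [hUt]
  have tV : Hof qt (fun w : 𝒰 × 𝒳 × 𝒵 × 𝒱 => w.2.2.2) = Hof q (fun w => w.2.2.2) := by
    unfold Hof; rw [hVt]
  -- chain rule for q
  have hentq : ent q = Hof q (fun w => (w.1, w.2.1)) + Hof q (fun w => (w.2.1, w.2.2.1))
      + Hof q (fun w => (w.2.2.1, w.2.2.2)) - Hof q (fun w => w.2.1)
      - Hof q (fun w => w.2.2.1) := ent_markov p a b q hp0 ha0 ha1 hb0 hb1 hqf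
  -- the two identities
  have c1 : MI qt (fun w => (w.1, w.2.2.2)) (fun w => (w.2.1, w.2.2.1))
        - MI q (fun w => (w.1, w.2.2.2)) (fun w => (w.2.1, w.2.2.1))
        + KL (pmap (fun w => (w.2.1, w.2.2.1)) qt)
            (fun xz => pmap Prod.fst p xz.1 * pmap Prod.snd p xz.2)
      = KL qt (fun w => pmap (fun w' => (w'.1, w'.2.1)) q (w.1, w.2.1)
                * pmap (fun w' => (w'.2.2.1, w'.2.2.2)) q (w.2.2.1, w.2.2.2)) := by
    rw [eMIt, eMIq, k1, k2]
    linarith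
  have c2 : MI qt (fun w => (w.1, w.2.2.2)) (fun w => (w.2.1, w.2.2.1))
        - MI q (fun w => (w.1, w.2.2.2)) (fun w => (w.2.1, w.2.2.1))
        + KL (pmap (fun w => (w.2.1, w.2.2.1)) qt)
            (fun xz => pmap Prod.fst p xz.1 * pmap Prod.snd p xz.2)
      = MI qt (fun w => (w.2.1, w.1)) (fun w => (w.2.2.1, w.2.2.2)) := by
    rw [eMIt, eMIq, k2, eMIt2]
    linarith
  refine ⟨c1, c2, ?_⟩
  have hMIuv : MI q (fun w => w.1) (fun w => w.2.2.2)
      = MI qt (fun w => w.1) (fun w => w.2.2.2) := by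
    show Hof q (fun w => w.1) + Hof q (fun w => w.2.2.2)
        - Hof q (fun w : 𝒰 × 𝒳 × 𝒵 × 𝒱 => (w.1, w.2.2.2))
      = Hof qt (fun w => w.1) + Hof qt (fun w => w.2.2.2)
        - Hof qt (fun w : 𝒰 × 𝒳 × 𝒵 × 𝒱 => (w.1, w.2.2.2))
    rw [tU, tV, tUV]
  have hdpi : MI qt (fun w : 𝒰 × 𝒳 × 𝒵 × 𝒱 => w.1) (fun w => w.2.2.2)
      ≤ MI qt (fun w => (w.2.1, w.1)) (fun w => (w.2.2.1, w.2.2.2)) :=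
    MI_comp_le qt ⟨hqt0, hqt1⟩ (fun w => (w.2.1, w.1)) (fun w => (w.2.2.1, w.2.2.2))
      Prod.snd Prod.snd
  rw [hMIuv, ← c2] at *
  exact hdpi

end Biclustering
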